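/- In the concavized setting, the greedy solution is exactly optimal at each of its break points: if c^(k) is the total budget spent by the greedy algorithm after k iterations, then the greedy welfare W^(k) equals the optimal MCKP value with capacity exactly c^(k). -/
import Mathlib


/-- the greedy solution is exactly optimal at each of its break points:
the greedy welfare is the greatest MCKP value with capacity equal to the spent budget. -/
theorem stmt11 {ι : Type*} [Fintype ι]
    (m : ι → ℕ) (w s : ι → ℕ → ℝ) (g : ι → ℕ) (eSplit : ℝ)
    (hm : ∀ i, 1 ≤ m i) (hg : ∀ i, g i < m i)
    (hw0 : ∀ i, w i 0 = 0)
    (hwmono : ∀ i a b, a < b → b < m i → w i a < w i b)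
    (hsmono : ∀ i a b, a < b → b < m i → s i a < s i b)
    (heff_dec : ∀ i j, 1 ≤ j → j + 1 < m i →
      (s i (j+1) - s i j) / (w i (j+1) - w i j)
        < (s i j - s i (j-1)) / (w i j - w i (j-1)))
    (heSplit_nn : 0 ≤ eSplit)
    (hge : ∀ i j, 1 ≤ j → j ≤ g i →
      eSplit ≤ (s i j - s i (j-1)) / (w i j - w i (j-1)))
    (hle : ∀ i j, g i < j → j < m i →
      (s i j - s i (j-1)) / (w i j - w i (j-1)) ≤ eSplit) :
    IsGreatest {p : ℝ | ∃ x : ι → ℕ, (∀ i, x i < m i) ∧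
        (∑ i, w i (x i)) ≤ (∑ i, w i (g i)) ∧ p = ∑ i, s i (x i)}
      (∑ i, s i (g i)) := by
  constructor
  · exact ⟨g, hg, le_refl _, rfl⟩
  · rintro p ⟨x, hxm, hxw, rfl⟩
    -- per-class bound: s i (x i) - s i (g i) ≤ eSplit * (w i (x i) - w i (g i))
    have key : ∀ i, s i (x i) - s i (g i) ≤ eSplit * (w i (x i) - w i (g i)) := by
      intro i
      -- upward lemma
      have up : ∀ b, g i ≤ b → b < m i →
          s i b - s i (g i) ≤ eSplit * (w i b - w i (g i)) := by
        intro b hb hbm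
        induction b, hb using Nat.le_induction with
        | base => simp
        | succ b hb ih =>
          have hbm' : b < m i := Nat.lt_of_succ_lt hbm
          have ih' := ih hbm'
          have hw : 0 < w i (b+1) - w i b :=
            sub_pos.mpr (hwmono i b (b+1) (Nat.lt_succ_self b) hbm)
          have hr := hle i (b+1) (Nat.lt_succ_of_le hb) hbm
          simp only [Nat.add_sub_cancel] at hr
          have hstep : s i (b+1) - s i b ≤ eSplit * (w i (b+1) - w i b) := by
            have := (div_le_iff₀ hw).mp hr
            linarith
          nlinarith
      -- downward lemma
      have down : ∀ a b, a ≤ b → b ≤ g i →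
          eSplit * (w i b - w i a) ≤ s i b - s i a := by
        intro a b hab hbg
        induction b, hab using Nat.le_induction with
        | base => simp
        | succ b hb ih =>
          have hbg' : b ≤ g i := Nat.le_of_succ_le hbg
          have ih' := ih hbg'
          have hbm : b + 1 < m i := Nat.lt_of_le_of_lt hbg (hg i)
          have hw : 0 < w i (b+1) - w i b :=
            sub_pos.mpr (hwmono i b (b+1) (Nat.lt_succ_self b) hbm)
          have hr := hge i (b+1) (Nat.le_add_left 1 b) hbg
          simp only [Nat.add_sub_cancel] at hr
          have hstep : eSplit * (w i (b+1) - w i b) ≤ s i (b+1) - s i b := by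
            have := (le_div_iff₀ hw).mp hr
            linarith
          nlinarith
      rcases le_total (x i) (g i) with h | h
      · have := down (x i) (g i) h (le_refl _)
        linarith
      · have := up (x i) h (hxm i)
        linarith
    have hsum : (∑ i, s i (x i)) - (∑ i, s i (g i))
        ≤ eSplit * ((∑ i, w i (x i)) - (∑ i, w i (g i))) := by
      rw [← Finset.sum_sub_distrib, ← Finset.sum_sub_distrib, Finset.mul_sum]
      exact Finset.sum_le_sum fun i _ => key i
    nlinarith [mul_nonneg heSplit_nn (sub_nonneg.mpr hxw)]
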